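/- arXiv:nlin/0411031 — 4 statements merged into one kernel-verified Lean document; each statement's English description precedes it below -/
import Mathlib

section
/- Let V be continuously differentiable on an open interval I around 0 with V(0) = V'(0) = 0, V''(0) = ω² > 0, and x V'(x) > 0 for all x ∈ I \ {0}. For small E > 0, let x₋(E) < 0 < x₊(E) be the turning points, i.e. the unique solutions of V(x) = E in I. Define the increasing change of variable X(x) by V(x) = ½ ω² X(x)² with sign(X(x)) = sign(x), let x(X) be its inverse, and set Δ(X) = x(X) − x(−X). Then the period integral satisfies T(E) = √2 ∫_{x₋(E)}^{x₊(E)} dx / √(E − V(x)) = (2/ω) ∫₀¹ Δ'((√(2E)/ω) u) du / √(1 − u²), where both integrals converge as improper integrals. -/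
open Real Set MeasureTheory

private lemma inv_sqrt_integrable_right {a b : ℝ} (C : ℝ) (hab : a < b) {f : ℝ → ℝ}
    (hm : Measurable f)
    (hb : ∀ x ∈ Ioo a b, ‖f x‖ ≤ C / Real.sqrt (b - x)) :
    IntervalIntegrable f volume a b := by
  have hrpow : IntervalIntegrable (fun y : ℝ => y ^ (-(1/2) : ℝ)) volume (b - a) (b - b) :=
    intervalIntegral.intervalIntegrable_rpow' (by norm_num)
  have hmaj : IntervalIntegrable (fun x : ℝ => C * (b - x) ^ (-(1/2) : ℝ)) volume a b := by
    have h2 := (hrpow.comp_sub_left b).const_mul C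
    simpa using h2
  refine hmaj.mono_fun' hm.aestronglyMeasurable.restrict ?_
  have hb' : ∀ᵐ (x : ℝ) ∂(volume.restrict (uIoc a b)), x ≠ b := by
    refine ae_restrict_of_ae (ae_iff.2 ?_)
    simpa using Real.volume_singleton (x := b)
  rw [uIoc_of_le hab.le]
  rw [uIoc_of_le hab.le] at hb'
  filter_upwards [ae_restrict_mem measurableSet_Ioc, hb'] with x hx hxb
  have hx' : x ∈ Ioo a b := ⟨hx.1, lt_of_le_of_ne hx.2 hxb⟩
  have h0 : (0:ℝ) < b - x := by linarith [hx'.2]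
  calc ‖f x‖ ≤ C / Real.sqrt (b - x) := hb x hx'
    _ = C * (b - x) ^ (-(1/2) : ℝ) := by
        rw [Real.rpow_neg h0.le, ← Real.sqrt_eq_rpow, div_eq_mul_inv]

private lemma inv_sqrt_integrable_left {a b : ℝ} (C : ℝ) (hab : a < b) {f : ℝ → ℝ}
    (hm : Measurable f)
    (hb : ∀ x ∈ Ioo a b, ‖f x‖ ≤ C / Real.sqrt (x - a)) :
    IntervalIntegrable f volume a b := by
  rw [IntervalIntegrable.iff_comp_neg]
  refine (inv_sqrt_integrable_right C (by linarith : -b < -a)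
    (hm.comp measurable_neg) ?_).symm
  intro x hx
  have h1 := hb (-x) ⟨by linarith [hx.2], by linarith [hx.1]⟩
  have h2 : -a - x = -x - a := by ring
  rw [h2]
  exact h1

set_option maxHeartbeats 1000000 in
/-- **Change of variable in the period integral.**
Let `V` be continuously differentiable on an open interval `I = (p,q)` around `0`
with `V(0) = V'(0) = 0`, `V''(0) = ω² > 0`, and `x V'(x) > 0` on `I \ {0}`.
For `E > 0` let `x₋(E) < 0 < x₊(E)` be the unique turning points in `I`.
Define the increasing change of variable `X(x)` by `V(x) = ½ ω² X(x)²` with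
`sign(X(x)) = sign(x)`, let `x(X)` be its inverse and `Δ(X) = x(X) − x(−X)`.
Then the period integral satisfies
`T(E) = √2 ∫_{x₋}^{x₊} dx/√(E − V(x)) = (2/ω) ∫₀¹ Δ'((√(2E)/ω) u)/√(1 − u²) du`,
both integrals being convergent. -/
theorem period_integral_change_of_variable
    (ω : ℝ) (hω : 0 < ω) (p q : ℝ) (hp : p < 0) (hq : 0 < q)
    (V : ℝ → ℝ) (hV : ContDiffOn ℝ 1 V (Ioo p q))
    (hV0 : V 0 = 0) (hV'0 : deriv V 0 = 0) (hV''0 : deriv (deriv V) 0 = ω ^ 2)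
    (hconv : ∀ x ∈ Ioo p q, x ≠ 0 → 0 < x * deriv V x)
    (E : ℝ) (hE : 0 < E)
    (xm xp : ℝ) (hxm : xm ∈ Ioo p q) (hxp : xp ∈ Ioo p q)
    (hxmneg : xm < 0) (hxppos : 0 < xp)
    (hVxm : V xm = E) (hVxp : V xp = E)
    (huniq : ∀ x ∈ Ioo p q, V x = E → x = xm ∨ x = xp)
    (X : ℝ → ℝ) (hXcont : ContinuousOn X (Ioo p q))
    (hXmono : StrictMonoOn X (Ioo p q))
    (hXV : ∀ x ∈ Ioo p q, V x = (1 / 2) * ω ^ 2 * X x ^ 2)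
    (hXsign : ∀ x ∈ Ioo p q, Real.sign (X x) = Real.sign x)
    (xinv : ℝ → ℝ) (hinv : ∀ x ∈ Ioo p q, xinv (X x) = x)
    (hdiff : ∀ x ∈ Ioo p q, DifferentiableAt ℝ xinv (X x))
    (Δ : ℝ → ℝ) (hΔ : Δ = fun s => xinv s - xinv (-s)) :
    IntervalIntegrable (fun x => 1 / Real.sqrt (E - V x)) volume xm xp ∧
      IntervalIntegrable
        (fun u => deriv Δ (Real.sqrt (2 * E) / ω * u) / Real.sqrt (1 - u ^ 2))
        volume 0 1 ∧
      Real.sqrt 2 * (∫ x in xm..xp, 1 / Real.sqrt (E - V x)) =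
        (2 / ω) *
          ∫ u in (0 : ℝ)..1,
            deriv Δ (Real.sqrt (2 * E) / ω * u) / Real.sqrt (1 - u ^ 2) := by
  set a : ℝ := Real.sqrt (2 * E) / ω with ha_def
  have h2E : (0:ℝ) < 2 * E := by linarith
  have ha_pos : 0 < a := div_pos (Real.sqrt_pos.2 h2E) hω
  have ha_sq : a ^ 2 = 2 * E / ω ^ 2 := by
    rw [ha_def, div_pow, Real.sq_sqrt h2E.le]
  have hIoo : IsOpen (Ioo p q) := isOpen_Ioo
  have hxmxp : xm < xp := lt_trans hxmneg hxppos
  have hsub : Icc xm xp ⊆ Ioo p q := Icc_subset_Ioo hxm.1 hxp.2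
  have h0mem : (0:ℝ) ∈ Ioo p q := ⟨hp, hq⟩
  have hVdiff : ∀ x ∈ Ioo p q, DifferentiableAt ℝ V x := fun x hx =>
    (hV.differentiableOn one_ne_zero).differentiableAt (hIoo.mem_nhds hx)
  have hV'cont : ContinuousOn (deriv V) (Ioo p q) :=
    hV.continuousOn_deriv_of_isOpen hIoo le_rfl
  have hV'pos : ∀ x ∈ Ioo p q, 0 < x → 0 < deriv V x := by
    intro x hx h0
    by_contra h
    push_neg at h
    nlinarith [hconv x hx h0.ne']
  have hV'neg : ∀ x ∈ Ioo p q, x < 0 → deriv V x < 0 := by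
    intro x hx h0
    by_contra h
    push_neg at h
    nlinarith [hconv x hx h0.ne]
  -- sign facts for X
  have hXpos : ∀ x ∈ Ioo p q, 0 < x → 0 < X x := by
    intro x hx h
    have hs := hXsign x hx
    rw [Real.sign_of_pos h] at hs
    rcases lt_trichotomy (X x) 0 with h' | h' | h'
    · rw [Real.sign_of_neg h'] at hs; norm_num at hs
    · rw [h', Real.sign_zero] at hs; norm_num at hs
    · exact h'
  have hXneg : ∀ x ∈ Ioo p q, x < 0 → X x < 0 := by
    intro x hx h
    have hs := hXsign x hx
    rw [Real.sign_of_neg h] at hs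
    rcases lt_trichotomy (X x) 0 with h' | h' | h'
    · exact h'
    · rw [h', Real.sign_zero] at hs; norm_num at hs
    · rw [Real.sign_of_pos h'] at hs; norm_num at hs
  have hX0 : X 0 = 0 := by
    have hs := hXsign 0 h0mem
    rw [Real.sign_zero] at hs
    exact Real.sign_eq_zero_iff.1 hs
  have hXne : ∀ x ∈ Ioo p q, x ≠ 0 → X x ≠ 0 := by
    intro x hx hx0
    rcases lt_or_gt_of_ne hx0 with h | h
    · exact (hXneg x hx h).ne
    · exact (hXpos x hx h).ne'
  have hXsq : ∀ x ∈ Ioo p q, V x = E → X x ^ 2 = a ^ 2 := by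
    intro x hx hVx
    have := hXV x hx
    rw [hVx] at this
    rw [ha_sq]
    field_simp at this ⊢
    linarith
  have hXxp : X xp = a := by
    have h2 := hXsq xp hxp hVxp
    have h3 : 0 < X xp := hXpos xp hxp hxppos
    nlinarith
  have hXxm : X xm = -a := by
    have h2 := hXsq xm hxm hVxm
    have h3 : X xm < 0 := hXneg xm hxm hxmneg
    nlinarith
  have hinv0 : xinv 0 = 0 := by
    have := hinv 0 h0mem
    rwa [hX0] at this
  -- surjectivity onto [-a, a]
  have hsurj : ∀ s ∈ Icc (-a) a, ∃ x ∈ Icc xm xp, X x = s := by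
    intro s hs
    have h1 : s ∈ Icc (X xm) (X xp) := by rw [hXxm, hXxp]; exact hs
    have h2 := intermediate_value_Icc hxmxp.le (hXcont.mono hsub)
    obtain ⟨x, hx, hxs⟩ := h2 h1
    exact ⟨x, hx, hxs⟩
  have hkey : ∀ s ∈ Icc (-a) a, xinv s ∈ Icc xm xp ∧ X (xinv s) = s := by
    intro s hs
    obtain ⟨x, hx, rfl⟩ := hsurj s hs
    rw [hinv x (hsub hx)]
    exact ⟨hx, rfl⟩
  have hxinv_diff : ∀ s ∈ Icc (-a) a, DifferentiableAt ℝ xinv s := by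
    intro s hs
    obtain ⟨hmem, hXs⟩ := hkey s hs
    have := hdiff (xinv s) (hsub hmem)
    rwa [hXs] at this
  have haIcc : -a ∈ Icc (-a) a := ⟨le_rfl, by linarith⟩
  have haIcc' : a ∈ Icc (-a) a := ⟨by linarith, le_rfl⟩
  have h0Icc : (0:ℝ) ∈ Icc (-a) a := ⟨by linarith, by linarith⟩
  have hxinv_a : xinv a = xp := by
    have := hinv xp hxp; rwa [hXxp] at this
  have hxinv_ma : xinv (-a) = xm := by
    have := hinv xm hxm; rwa [hXxm] at this
  have hxinv_mono : StrictMonoOn xinv (Icc (-a) a) := by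
    intro s hs t ht hst
    by_contra h
    push_neg at h
    have h1 := hkey s hs
    have h2 := hkey t ht
    have : t ≤ s := by
      rw [← h1.2, ← h2.2]
      rcases eq_or_lt_of_le h with heq | hlt
      · rw [heq]
      · exact (hXmono (hsub h2.1) (hsub h1.1) hlt).le
    linarith
  have hVs : ∀ s ∈ Icc (-a) a, V (xinv s) = 1/2 * ω^2 * s^2 := by
    intro s hs
    obtain ⟨hmem, hXs⟩ := hkey s hs
    have := hXV (xinv s) (hsub hmem)
    rw [hXs] at this
    linarith
  have hxinv_sign : ∀ s ∈ Icc (-a) a, s ≠ 0 → xinv s ≠ 0 := by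
    intro s hs hs0
    obtain ⟨hmem, hXs⟩ := hkey s hs
    intro h
    rw [h, hX0] at hXs
    exact hs0 hXs.symm
  have hxinv_pos : ∀ s ∈ Icc (-a) a, 0 < s → 0 < xinv s := by
    intro s hs h0
    obtain ⟨hmem, hXs⟩ := hkey s hs
    by_contra h
    push_neg at h
    rcases eq_or_lt_of_le h with heq | hlt
    · rw [heq, hX0] at hXs; linarith [hXs]
    · have := hXneg (xinv s) (hsub hmem) hlt
      rw [hXs] at this; linarith
  have hxinv_neg : ∀ s ∈ Icc (-a) a, s < 0 → xinv s < 0 := by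
    intro s hs h0
    obtain ⟨hmem, hXs⟩ := hkey s hs
    by_contra h
    push_neg at h
    rcases eq_or_lt_of_le h with heq | hlt
    · rw [← heq, hX0] at hXs; linarith [hXs]
    · have := hXpos (xinv s) (hsub hmem) hlt
      rw [hXs] at this; linarith
  -- derivative of X
  have hXderiv : ∀ x ∈ Ioo p q, x ≠ 0 →
      HasDerivAt X (deriv V x / (ω^2 * X x)) x := by
    intro x hx hx0
    rcases lt_or_gt_of_ne hx0 with hneg | hpos
    · -- x < 0
      have hX : X x < 0 := hXneg x hx hneg
      have hVx : 0 < V x := by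
        rw [hXV x hx]
        nlinarith [pow_pos hω 2, pow_two_pos_of_ne_zero hX.ne]
      have hd : HasDerivAt (fun y => -(Real.sqrt (2 * V y) / ω))
          (-(2 * deriv V x / (2 * Real.sqrt (2 * V x)) / ω)) x :=
        ((((hVdiff x hx).hasDerivAt.const_mul 2).sqrt
          (by nlinarith)).div_const ω).neg
      have hev : (fun y => -(Real.sqrt (2 * V y) / ω)) =ᶠ[nhds x] X := by
        filter_upwards [hIoo.mem_nhds hx,
          (isOpen_Iio).mem_nhds (show x ∈ Iio 0 from hneg)] with y hy hy'
        have hXy : X y < 0 := hXneg y hy hy'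
        rw [show 2 * V y = (ω * -X y)^2 from by rw [hXV y hy]; ring,
          Real.sqrt_sq (by nlinarith)]
        field_simp
      have hfinal := hd.congr_of_eventuallyEq hev.symm
      have hsq : Real.sqrt (2 * V x) = ω * -X x := by
        rw [show 2 * V x = (ω * -X x)^2 from by rw [hXV x hx]; ring,
          Real.sqrt_sq (by nlinarith)]
      refine hfinal.congr_deriv ?_
      rw [hsq]
      have hXne' : X x ≠ 0 := hX.ne
      field_simp
    · -- 0 < x
      have hX : 0 < X x := hXpos x hx hpos
      have hVx : 0 < V x := by
        rw [hXV x hx]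
        nlinarith [pow_pos hω 2, pow_two_pos_of_ne_zero hX.ne']
      have hd : HasDerivAt (fun y => Real.sqrt (2 * V y) / ω)
          (2 * deriv V x / (2 * Real.sqrt (2 * V x)) / ω) x :=
        (((hVdiff x hx).hasDerivAt.const_mul 2).sqrt
          (by nlinarith)).div_const ω
      have hev : (fun y => Real.sqrt (2 * V y) / ω) =ᶠ[nhds x] X := by
        filter_upwards [hIoo.mem_nhds hx,
          (isOpen_Ioi).mem_nhds (show x ∈ Ioi 0 from hpos)] with y hy hy'
        have hXy : 0 < X y := hXpos y hy hy'
        rw [show 2 * V y = (ω * X y)^2 from by rw [hXV y hy]; ring,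
          Real.sqrt_sq (by positivity)]
        field_simp
      have hfinal := hd.congr_of_eventuallyEq hev.symm
      have hsq : Real.sqrt (2 * V x) = ω * X x := by
        rw [show 2 * V x = (ω * X x)^2 from by rw [hXV x hx]; ring,
          Real.sqrt_sq (by positivity)]
      refine hfinal.congr_deriv ?_
      rw [hsq]
      have hXne' : X x ≠ 0 := hX.ne'
      field_simp
  -- derivative of xinv
  have hderiv_xinv : ∀ x ∈ Ioo p q, x ≠ 0 →
      deriv xinv (X x) = ω^2 * X x / deriv V x := by
    intro x hx hx0
    have hX := hXderiv x hx hx0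
    have hc : HasDerivAt (xinv ∘ X)
        (deriv xinv (X x) * (deriv V x / (ω^2 * X x))) x :=
      ((hdiff x hx).hasDerivAt).comp x hX
    have hid : (xinv ∘ X) =ᶠ[nhds x] id := by
      filter_upwards [hIoo.mem_nhds hx] with y hy
      exact hinv y hy
    have h1 : HasDerivAt id (deriv xinv (X x) * (deriv V x / (ω^2 * X x))) x :=
      hc.congr_of_eventuallyEq hid.symm
    have h2 : deriv xinv (X x) * (deriv V x / (ω^2 * X x)) = 1 :=
      h1.unique (hasDerivAt_id x)
    have hVne : deriv V x ≠ 0 := by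
      rcases lt_or_gt_of_ne hx0 with h | h
      · exact (hV'neg x hx h).ne
      · exact (hV'pos x hx h).ne'
    have hXne' : X x ≠ 0 := hXne x hx hx0
    have hωne : ω ≠ 0 := hω.ne'
    field_simp at h2
    rw [eq_div_iff hVne]
    linear_combination h2
  have hds : ∀ s ∈ Icc (-a) a, s ≠ 0 →
      deriv xinv s = ω^2 * s / deriv V (xinv s) ∧ 0 < deriv xinv s := by
    intro s hs hs0
    obtain ⟨hmem, hXs⟩ := hkey s hs
    have hx0 : xinv s ≠ 0 := hxinv_sign s hs hs0
    have h1 := hderiv_xinv (xinv s) (hsub hmem) hx0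
    rw [hXs] at h1
    refine ⟨h1, ?_⟩
    rw [h1]
    rcases lt_or_gt_of_ne hs0 with h | h
    · have hxn : xinv s < 0 := hxinv_neg s hs h
      have hVn : deriv V (xinv s) < 0 := hV'neg _ (hsub hmem) hxn
      have : ω^2 * s < 0 := mul_neg_of_pos_of_neg (pow_pos hω 2) h
      exact div_pos_of_neg_of_neg this hVn
    · have hxn : 0 < xinv s := hxinv_pos s hs h
      have hVn : 0 < deriv V (xinv s) := hV'pos _ (hsub hmem) hxn
      have : 0 < ω^2 * s := mul_pos (pow_pos hω 2) h
      exact div_pos this hVn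
  -- bound near zero
  have hbound0 : ∃ δ > 0, δ ≤ a ∧
      ∀ s ∈ Icc (-a) a, |s| ≤ δ → s ≠ 0 → |deriv xinv s| ≤ 4 := by
    have hdd : DifferentiableAt ℝ (deriv V) 0 := by
      by_contra h
      rw [deriv_zero_of_not_differentiableAt h] at hV''0
      nlinarith [pow_pos hω 2]
    have hdd' : HasDerivAt (deriv V) (ω^2) 0 := by
      have h1 := hdd.hasDerivAt
      rwa [hV''0] at h1
    have hlo := hasDerivAt_iff_isLittleO.mp hdd'
    have heps := hlo.def (show (0:ℝ) < ω^2/2 by positivity)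
    have hcomb : ∀ᶠ x in nhds (0:ℝ), |deriv V x - ω^2 * x| ≤ ω^2/2 * |x| ∧ x ∈ Ioo p q := by
      filter_upwards [heps, hIoo.mem_nhds h0mem] with x h1 h2
      refine ⟨?_, h2⟩
      have h3 : deriv V x - ω^2 * x = deriv V x - deriv V 0 - (x - 0) • (ω^2) := by
        rw [hV'0, smul_eq_mul]; ring
      rw [h3]
      simpa [Real.norm_eq_abs] using h1
    obtain ⟨δ₁, hδ₁pos, hδ₁⟩ := Metric.eventually_nhds_iff.mp hcomb
    have hcont0 : ContinuousAt xinv 0 := (hxinv_diff 0 h0Icc).continuousAt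
    have htend : Filter.Tendsto xinv (nhds 0) (nhds 0) := by
      have h1 := hcont0.tendsto
      rwa [hinv0] at h1
    obtain ⟨δ, hδpos, hδ⟩ := Metric.eventually_nhds_iff.mp
      (Metric.tendsto_nhds.mp htend δ₁ hδ₁pos)
    refine ⟨min (δ/2) a, by positivity, min_le_right _ _, ?_⟩
    intro s hs hsδ hs0
    have hsd : dist s 0 < δ := by
      rw [Real.dist_eq, sub_zero]
      calc |s| ≤ min (δ/2) a := hsδ
        _ ≤ δ/2 := min_le_left _ _
        _ < δ := by linarith
    set x := xinv s with hx_def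
    have hxd : dist x 0 < δ₁ := hδ hsd
    have hxabs : |x| < δ₁ := by rwa [Real.dist_eq, sub_zero] at hxd
    obtain ⟨hVb, hxmem⟩ := hδ₁ hxd
    have hx0 : x ≠ 0 := hxinv_sign s hs hs0
    have hVlow : ω^2/2 * |x| ≤ |deriv V x| := by
      have h9 : |ω^2 * x| - |deriv V x| ≤ |ω^2 * x - deriv V x| := abs_sub_abs_le_abs_sub _ _
      have h10 : |ω^2 * x| = ω^2 * |x| := by rw [abs_mul, abs_of_pos (pow_pos hω 2)]
      have h11 : |ω^2 * x - deriv V x| = |deriv V x - ω^2 * x| := abs_sub_comm _ _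
      linarith
    have hVxbound : |V x| ≤ 3*ω^2/2 * x^2 := by
      have habs3 : ∀ c : ℝ, |c| < δ₁ → |deriv V c| ≤ 3*ω^2/2 * |c| := by
        intro c hcabs
        have hcb := (hδ₁ (show dist c 0 < δ₁ by rwa [Real.dist_eq, sub_zero])).1
        have h9 : |deriv V c| - |ω^2 * c| ≤ |deriv V c - ω^2 * c| := abs_sub_abs_le_abs_sub _ _
        have h10 : |ω^2 * c| = ω^2 * |c| := by rw [abs_mul, abs_of_pos (pow_pos hω 2)]
        linarith
      rcases lt_or_gt_of_ne hx0 with hxneg | hxpos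
      · have hsubI : Icc x (0:ℝ) ⊆ Ioo p q := by
          intro y hy
          refine (hδ₁ (show dist y 0 < δ₁ from ?_)).2
          rw [Real.dist_eq, sub_zero]
          rw [abs_of_nonpos hy.2]
          calc -y ≤ -x := by linarith [hy.1]
            _ ≤ |x| := neg_le_abs x
            _ < δ₁ := hxabs
        obtain ⟨c, hc, hcd⟩ := exists_hasDerivAt_eq_slope V (deriv V) hxneg
          (fun y hy => ((hVdiff y (hsubI hy)).continuousAt).continuousWithinAt)
          (fun y hy => (hVdiff y (hsubI (Ioo_subset_Icc_self hy))).hasDerivAt)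
        have hVx_eq : V x = deriv V c * x := by
          rw [eq_div_iff (show (0:ℝ) - x ≠ 0 by intro h; apply hx0; linarith)] at hcd
          rw [hV0] at hcd
          linear_combination hcd
        have hcabs : |c| < δ₁ := by
          rw [abs_of_neg hc.2]
          calc -c ≤ -x := by linarith [hc.1]
            _ ≤ |x| := neg_le_abs x
            _ < δ₁ := hxabs
        have htri := habs3 c hcabs
        have hcx : |c| ≤ |x| := by
          rw [abs_of_neg hc.2, abs_of_neg hxneg]
          linarith [hc.1]
        rw [hVx_eq, abs_mul]
        calc |deriv V c| * |x| ≤ (3*ω^2/2 * |x|) * |x| := by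
              apply mul_le_mul_of_nonneg_right _ (abs_nonneg x)
              calc |deriv V c| ≤ 3*ω^2/2 * |c| := htri
                _ ≤ 3*ω^2/2 * |x| := by nlinarith [pow_pos hω 2]
          _ = 3*ω^2/2 * x^2 := by
              rw [mul_assoc, ← pow_two, sq_abs]
      · have hsubI : Icc (0:ℝ) x ⊆ Ioo p q := by
          intro y hy
          refine (hδ₁ (show dist y 0 < δ₁ from ?_)).2
          rw [Real.dist_eq, sub_zero]
          rw [abs_of_nonneg hy.1]
          calc y ≤ x := hy.2
            _ ≤ |x| := le_abs_self x
            _ < δ₁ := hxabs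
        obtain ⟨c, hc, hcd⟩ := exists_hasDerivAt_eq_slope V (deriv V) hxpos
          (fun y hy => ((hVdiff y (hsubI hy)).continuousAt).continuousWithinAt)
          (fun y hy => (hVdiff y (hsubI (Ioo_subset_Icc_self hy))).hasDerivAt)
        have hVx_eq : V x = deriv V c * x := by
          rw [eq_div_iff (show x - (0:ℝ) ≠ 0 by intro h; apply hx0; linarith)] at hcd
          rw [hV0] at hcd
          linear_combination -hcd
        have hcabs : |c| < δ₁ := by
          rw [abs_of_pos hc.1]
          calc c ≤ x := hc.2.le
            _ ≤ |x| := le_abs_self x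
            _ < δ₁ := hxabs
        have htri := habs3 c hcabs
        have hcx : |c| ≤ |x| := by
          rw [abs_of_pos hc.1, abs_of_pos hxpos]
          exact hc.2.le
        rw [hVx_eq, abs_mul]
        calc |deriv V c| * |x| ≤ (3*ω^2/2 * |x|) * |x| := by
              apply mul_le_mul_of_nonneg_right _ (abs_nonneg x)
              calc |deriv V c| ≤ 3*ω^2/2 * |c| := htri
                _ ≤ 3*ω^2/2 * |x| := by nlinarith [pow_pos hω 2]
          _ = 3*ω^2/2 * x^2 := by
              rw [mul_assoc, ← pow_two, sq_abs]
    have hs_sq : s^2 ≤ 4 * x^2 := by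
      have h6 := hVs s hs
      have h13 : 1/2*ω^2*s^2 ≤ 3*ω^2/2 * x^2 := by
        rw [← h6]
        exact le_trans (le_abs_self _) hVxbound
      nlinarith [pow_pos hω 2, sq_nonneg x]
    have hs_abs : |s| ≤ 2*|x| := by
      calc |s| = Real.sqrt (s^2) := (Real.sqrt_sq_eq_abs s).symm
        _ ≤ Real.sqrt (4*x^2) := Real.sqrt_le_sqrt hs_sq
        _ = 2*|x| := by
            rw [show (4:ℝ)*x^2 = (2*|x|)^2 by rw [mul_pow, sq_abs]; norm_num]
            exact Real.sqrt_sq (by positivity)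
    rw [(hds s hs hs0).1]
    have hxpos' : 0 < |x| := abs_pos.mpr hx0
    have hVpos' : 0 < |deriv V x| := lt_of_lt_of_le (by positivity) hVlow
    rw [abs_div, div_le_iff₀ hVpos']
    have h14 : |ω^2 * s| = ω^2 * |s| := by rw [abs_mul, abs_of_pos (pow_pos hω 2)]
    rw [h14]
    calc ω^2 * |s| ≤ ω^2 * (2*|x|) := by nlinarith [pow_pos hω 2]
      _ = 4 * (ω^2/2 * |x|) := by ring
      _ ≤ 4 * |deriv V x| := by linarith
  -- global bound
  have hMbound : ∃ M : ℝ, 0 ≤ M ∧ ∀ s ∈ Icc (-a) a, |deriv xinv s| ≤ M := by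
    obtain ⟨δ, hδpos, hδa, hδb⟩ := hbound0
    set K : Set ℝ := Icc (-a) (-δ) ∪ Icc δ a with hK
    have hKcomp : IsCompact K := isCompact_Icc.union isCompact_Icc
    have hKmem : ∀ s ∈ K, s ∈ Icc (-a) a ∧ s ≠ 0 := by
      intro s hs
      rcases hs with h | h
      · exact ⟨⟨h.1, by linarith [h.2]⟩, by intro h0; rw [h0] at h; linarith [h.2]⟩
      · exact ⟨⟨by linarith [h.1], h.2⟩, by intro h0; rw [h0] at h; linarith [h.1]⟩
    have hFcont : ContinuousOn (fun s => ω^2 * s / deriv V (xinv s)) K := by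
      intro s hs
      obtain ⟨hsI, hs0⟩ := hKmem s hs
      apply ContinuousAt.continuousWithinAt
      have hc1 : ContinuousAt xinv s := (hxinv_diff s hsI).continuousAt
      have hmem' : xinv s ∈ Ioo p q := hsub (hkey s hsI).1
      have hc2 : ContinuousAt (deriv V) (xinv s) := hV'cont.continuousAt (hIoo.mem_nhds hmem')
      have hVne : deriv V (xinv s) ≠ 0 := by
        rcases lt_or_gt_of_ne hs0 with h | h
        · exact (hV'neg _ hmem' (hxinv_neg s hsI h)).ne
        · exact (hV'pos _ hmem' (hxinv_pos s hsI h)).ne'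
      exact (continuousAt_const.mul continuousAt_id).div (hc2.comp hc1) hVne
    obtain ⟨C, hC⟩ := hKcomp.exists_bound_of_continuousOn hFcont
    refine ⟨max (max C 4) |deriv xinv 0|, le_max_of_le_right (abs_nonneg _), ?_⟩
    intro s hs
    rcases eq_or_ne s 0 with rfl | hs0
    · exact le_max_of_le_right le_rfl
    rcases le_or_gt |s| δ with hle | hgt
    · exact le_trans (hδb s hs hle hs0) (le_max_of_le_left (le_max_right _ _))
    · have hsK : s ∈ K := by
        rcases lt_or_gt_of_ne hs0 with h | h
        · left; exact ⟨hs.1, by rw [abs_of_neg h] at hgt; linarith⟩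
        · right; exact ⟨by rw [abs_of_pos h] at hgt; linarith, hs.2⟩
      rw [(hds s hs hs0).1]
      refine le_trans ?_ (le_max_of_le_left (le_max_left C 4))
      rw [abs_div, abs_mul, abs_of_pos (pow_pos hω 2)]
      simpa [Real.norm_eq_abs] using hC s hsK
  obtain ⟨M, hM0, hM⟩ := hMbound
  -- the transformed integrand
  set hfun : ℝ → ℝ := fun s => deriv xinv s / Real.sqrt (a^2 - s^2) with hfun_def
  have hfun_meas : Measurable hfun := by
    apply Measurable.div
    · exact measurable_deriv xinv
    · exact (Real.continuous_sqrt.comp (continuous_const.sub (continuous_pow 2))).measurable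
  have hint : IntervalIntegrable hfun volume (-a) a := by
    have h0a : IntervalIntegrable hfun volume 0 a := by
      apply inv_sqrt_integrable_right (M / Real.sqrt a) (by linarith : (0:ℝ) < a) hfun_meas
      intro s hs
      have hsI : s ∈ Icc (-a) a := ⟨by linarith [hs.1], hs.2.le⟩
      have h1 : Real.sqrt (a^2 - s^2) = Real.sqrt (a + s) * Real.sqrt (a - s) := by
        rw [← Real.sqrt_mul (by linarith [hs.1] : (0:ℝ) ≤ a + s)]
        ring_nf
      have hden : Real.sqrt a * Real.sqrt (a - s) ≤ Real.sqrt (a + s) * Real.sqrt (a - s) := by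
        apply mul_le_mul_of_nonneg_right _ (Real.sqrt_nonneg _)
        exact Real.sqrt_le_sqrt (by linarith [hs.1])
      have hd1 : 0 < Real.sqrt (a - s) := Real.sqrt_pos.2 (by linarith [hs.2])
      have hda : 0 < Real.sqrt a := Real.sqrt_pos.2 (by linarith)
      simp only [hfun_def, Real.norm_eq_abs, abs_div]
      rw [abs_of_nonneg (Real.sqrt_nonneg _), h1]
      calc |deriv xinv s| / (Real.sqrt (a + s) * Real.sqrt (a - s))
          ≤ M / (Real.sqrt a * Real.sqrt (a - s)) :=
            div_le_div₀ hM0 (hM s hsI) (by positivity) hden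
        _ = M / Real.sqrt a / Real.sqrt (a - s) := by rw [div_div]
    have hm0 : IntervalIntegrable hfun volume (-a) 0 := by
      apply inv_sqrt_integrable_left (M / Real.sqrt a) (by linarith : -a < (0:ℝ)) hfun_meas
      intro s hs
      have hsI : s ∈ Icc (-a) a := ⟨hs.1.le, by linarith [hs.2]⟩
      have h1 : Real.sqrt (a^2 - s^2) = Real.sqrt (a + s) * Real.sqrt (a - s) := by
        rw [← Real.sqrt_mul (by linarith [hs.1] : (0:ℝ) ≤ a + s)]
        ring_nf
      have hden : Real.sqrt (a + s) * Real.sqrt a ≤ Real.sqrt (a + s) * Real.sqrt (a - s) := by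
        apply mul_le_mul_of_nonneg_left _ (Real.sqrt_nonneg _)
        exact Real.sqrt_le_sqrt (by linarith [hs.2])
      have hd1 : 0 < Real.sqrt (a + s) := Real.sqrt_pos.2 (by linarith [hs.1])
      have hda : 0 < Real.sqrt a := Real.sqrt_pos.2 (by linarith)
      simp only [hfun_def, Real.norm_eq_abs, abs_div]
      rw [abs_of_nonneg (Real.sqrt_nonneg _), h1]
      rw [sub_neg_eq_add, add_comm s a]
      calc |deriv xinv s| / (Real.sqrt (a + s) * Real.sqrt (a - s))
          ≤ M / (Real.sqrt (a + s) * Real.sqrt a) := by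
            apply div_le_div₀ hM0 (hM s hsI) (by positivity)
            calc Real.sqrt (a + s) * Real.sqrt a
                ≤ Real.sqrt (a + s) * Real.sqrt (a - s) := hden
              _ ≤ Real.sqrt (a + s) * Real.sqrt (a - s) := le_rfl
        _ = M / Real.sqrt a / Real.sqrt (a + s) := by
            rw [div_div, mul_comm]
    exact hm0.trans h0a
  -- change of variables
  set g : ℝ → ℝ := fun x => 1 / Real.sqrt (E - V x) with hg_def
  have hder_within : ∀ s ∈ Ioo (-a) a,
      HasDerivWithinAt xinv (deriv xinv s) (Ioo (-a) a) s := fun s hs =>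
    ((hxinv_diff s (Ioo_subset_Icc_self hs)).hasDerivAt).hasDerivWithinAt
  have hinj : InjOn xinv (Ioo (-a) a) :=
    (hxinv_mono.injOn).mono Ioo_subset_Icc_self
  have himg : xinv '' (Ioo (-a) a) = Ioo xm xp := by
    apply Subset.antisymm
    · rintro _ ⟨s, hs, rfl⟩
      constructor
      · rw [← hxinv_ma]
        exact hxinv_mono haIcc (Ioo_subset_Icc_self hs) hs.1
      · rw [← hxinv_a]
        exact hxinv_mono (Ioo_subset_Icc_self hs) haIcc' hs.2
    · intro x hx
      have hx' : x ∈ Ioo p q := hsub (Ioo_subset_Icc_self hx)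
      refine ⟨X x, ⟨?_, ?_⟩, hinv x hx'⟩
      · rw [← hXxm]; exact hXmono hxm hx' hx.1
      · rw [← hXxp]; exact hXmono hx' hxp hx.2
  have hcomp_eq : (fun s => |deriv xinv s| • g (xinv s)) =ᶠ[ae (volume.restrict (Ioo (-a) a))]
      fun s => (Real.sqrt 2 / ω) * hfun s := by
    have hae0 : ∀ᵐ (s : ℝ) ∂(volume.restrict (Ioo (-a) a)), s ≠ 0 := by
      refine ae_restrict_of_ae (ae_iff.2 ?_)
      simpa using Real.volume_singleton (x := (0:ℝ))
    filter_upwards [ae_restrict_mem measurableSet_Ioo, hae0] with s hs hs0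
    have hsIcc : s ∈ Icc (-a) a := Ioo_subset_Icc_self hs
    have hdpos := (hds s hsIcc hs0).2
    have hs2 : 0 < a^2 - s^2 := by nlinarith [hs.1, hs.2]
    have hEg : E - V (xinv s) = (ω / Real.sqrt 2)^2 * (a^2 - s^2) := by
      rw [hVs s hsIcc, div_pow, Real.sq_sqrt (by norm_num : (0:ℝ) ≤ 2), ha_sq]
      field_simp
    have hsq : Real.sqrt (E - V (xinv s)) = ω / Real.sqrt 2 * Real.sqrt (a^2 - s^2) := by
      rw [hEg, Real.sqrt_mul (by positivity), Real.sqrt_sq (by positivity)]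
    have hsne : Real.sqrt (a^2 - s^2) ≠ 0 := (Real.sqrt_pos.mpr hs2).ne'
    have h2ne : Real.sqrt 2 ≠ 0 := by positivity
    simp only [hg_def, hfun_def, smul_eq_mul]
    rw [hsq, abs_of_pos hdpos]
    field_simp
  have hiff := integrableOn_image_iff_integrableOn_abs_deriv_smul
    measurableSet_Ioo hder_within hinj g
  rw [himg] at hiff
  have hint_Ioo : IntegrableOn (fun s => (Real.sqrt 2 / ω) * hfun s) (Ioo (-a) a) volume := by
    have h1 : IntegrableOn hfun (Ioo (-a) a) volume := by
      rw [← intervalIntegrable_iff_integrableOn_Ioo_of_le (by linarith : -a ≤ a)]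
      exact hint
    exact h1.const_mul _
  have hInt1 : IntegrableOn (fun s => |deriv xinv s| • g (xinv s)) (Ioo (-a) a) volume :=
    hint_Ioo.congr hcomp_eq.symm
  have hgInt : IntegrableOn g (Ioo xm xp) volume := hiff.2 hInt1
  have hgII : IntervalIntegrable g volume xm xp :=
    (intervalIntegrable_iff_integrableOn_Ioo_of_le hxmxp.le).2 hgInt
  -- the integral identity, x-side to s-side
  have hIeq : ∫ x in xm..xp, g x = (Real.sqrt 2 / ω) * ∫ s in (-a)..a, hfun s := by
    have h1 := integral_image_eq_integral_abs_deriv_smul measurableSet_Ioo hder_within hinj g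
    rw [himg] at h1
    calc ∫ x in xm..xp, g x = ∫ x in Ioo xm xp, g x := by
          rw [intervalIntegral.integral_of_le hxmxp.le, integral_Ioc_eq_integral_Ioo]
      _ = ∫ s in Ioo (-a) a, |deriv xinv s| • g (xinv s) := h1
      _ = ∫ s in Ioo (-a) a, (Real.sqrt 2 / ω) * hfun s := integral_congr_ae hcomp_eq
      _ = (Real.sqrt 2 / ω) * ∫ s in Ioo (-a) a, hfun s := by
          rw [integral_const_mul]
      _ = (Real.sqrt 2 / ω) * ∫ s in (-a)..a, hfun s := by
          rw [intervalIntegral.integral_of_le (by linarith : -a ≤ a),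
            integral_Ioc_eq_integral_Ioo]
  -- symmetrization and final substitution
  set Fq : ℝ → ℝ := fun s => deriv Δ s / Real.sqrt (a^2 - s^2) with hFq_def
  have hfun_neg : IntervalIntegrable (fun s => hfun (-s)) volume 0 a := by
    have h1 : IntervalIntegrable hfun volume 0 (-a) :=
      (hint.mono_set' (by rw [uIoc_of_le (by linarith : -a ≤ (0:ℝ)), uIoc_of_le (by linarith : -a ≤ a)]; exact Ioc_subset_Ioc le_rfl (by linarith))).symm
    have h2 := (IntervalIntegrable.iff_comp_neg).mp h1
    simpa using h2
  have hfun_pos : IntervalIntegrable hfun volume 0 a :=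
    hint.mono_set' (by rw [uIoc_of_le (by linarith : (0:ℝ) ≤ a), uIoc_of_le (by linarith : -a ≤ a)]; exact Ioc_subset_Ioc (by linarith) le_rfl)
  have hDeq : EqOn (fun s => hfun s + hfun (-s)) Fq (Icc 0 a) := by
    intro s hs
    have hsI : s ∈ Icc (-a) a := ⟨by linarith [hs.1], hs.2⟩
    have hsI' : -s ∈ Icc (-a) a := ⟨by linarith [hs.2], by linarith [hs.1]⟩
    have hd1 := (hxinv_diff s hsI).hasDerivAt
    have hd2 : HasDerivAt (fun t => xinv (-t)) (deriv xinv (-s) * (-1)) s :=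
      ((hxinv_diff (-s) hsI').hasDerivAt).comp s (hasDerivAt_neg s)
    have hΔd : HasDerivAt Δ (deriv xinv s + deriv xinv (-s)) s := by
      rw [hΔ]
      have h3 := hd1.sub hd2
      refine h3.congr_deriv ?_
      ring
    simp only [hfun_def, hFq_def]
    rw [hΔd.deriv, neg_sq, ← add_div]
  have hFqint : IntervalIntegrable Fq volume 0 a := by
    have hsum := hfun_pos.add hfun_neg
    rw [intervalIntegrable_iff] at hsum ⊢
    refine hsum.congr_fun ?_ measurableSet_uIoc
    intro s hs
    rw [uIoc_of_le (by linarith : (0:ℝ) ≤ a)] at hs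
    exact hDeq ⟨hs.1.le, hs.2⟩
  have hseq : ∫ s in (-a)..a, hfun s = ∫ s in (0:ℝ)..a, Fq s := by
    have hfun_m : IntervalIntegrable hfun volume (-a) 0 :=
      hint.mono_set' (by
        rw [uIoc_of_le (by linarith : -a ≤ (0:ℝ)), uIoc_of_le (by linarith : -a ≤ a)]
        exact Ioc_subset_Ioc le_rfl (by linarith))
    have hflip : ∫ s in (-a)..(0:ℝ), hfun s = ∫ s in (0:ℝ)..a, hfun (-s) := by
      have h4 := intervalIntegral.integral_comp_neg (a := (0:ℝ)) (b := a) (f := hfun)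
      rw [neg_zero] at h4
      exact h4.symm
    have hcongr : ∫ s in (0:ℝ)..a, (hfun s + hfun (-s)) = ∫ s in (0:ℝ)..a, Fq s := by
      apply intervalIntegral.integral_congr
      intro s hs
      rw [uIcc_of_le (by linarith : (0:ℝ) ≤ a)] at hs
      exact hDeq hs
    calc ∫ s in (-a)..a, hfun s
        = (∫ s in (-a)..(0:ℝ), hfun s) + ∫ s in (0:ℝ)..a, hfun s :=
          (intervalIntegral.integral_add_adjacent_intervals hfun_m hfun_pos).symm
      _ = (∫ s in (0:ℝ)..a, hfun (-s)) + ∫ s in (0:ℝ)..a, hfun s := by rw [hflip]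
      _ = ∫ s in (0:ℝ)..a, (hfun s + hfun (-s)) := by
          rw [intervalIntegral.integral_add hfun_pos hfun_neg]
          exact add_comm _ _
      _ = ∫ s in (0:ℝ)..a, Fq s := hcongr
  -- final affine substitution
  have htg : (fun u => deriv Δ (a * u) / Real.sqrt (1 - u ^ 2)) =
      fun u => a * Fq (a * u) := by
    funext u
    simp only [hFq_def]
    have hfact : Real.sqrt (a^2 - (a*u)^2) = a * Real.sqrt (1 - u^2) := by
      rw [show a^2 - (a*u)^2 = a^2 * (1 - u^2) by ring,
        Real.sqrt_mul (sq_nonneg a), Real.sqrt_sq ha_pos.le]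
    rw [hfact]
    rcases eq_or_ne (Real.sqrt (1 - u^2)) 0 with h | h
    · rw [h]; simp
    · field_simp
  have hTint : IntervalIntegrable
      (fun u => deriv Δ (a * u) / Real.sqrt (1 - u ^ 2)) volume 0 1 := by
    rw [htg]
    have h1 := (hFqint.comp_mul_left (c := a)).const_mul a
    rw [zero_div, div_self ha_pos.ne'] at h1
    exact h1
  have hTeq : ∫ u in (0:ℝ)..1, deriv Δ (a * u) / Real.sqrt (1 - u ^ 2) =
      ∫ s in (0:ℝ)..a, Fq s := by
    rw [htg]
    rw [intervalIntegral.integral_const_mul]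
    rw [intervalIntegral.integral_comp_mul_left Fq ha_pos.ne']
    rw [mul_zero, mul_one, smul_eq_mul]
    rw [← mul_assoc, mul_inv_cancel₀ ha_pos.ne', one_mul]
  refine ⟨hgII, hTint, ?_⟩
  rw [hTeq, ← hseq, hIeq]
  rw [← mul_assoc]
  congr 1
  rw [← mul_div_assoc, Real.mul_self_sqrt (by norm_num : (0:ℝ) ≤ 2)]
end

section
/- Let Ṽ(x) = x²/2 + Σ_{n≥3} (α_{n−1}/n) xⁿ be a formal power series over ℝ and x(X) = X + Σ_{n≥2} σ_n Xⁿ the unique formal power series with leading coefficient 1 satisfying Ṽ(x(X)) = X²/2. Then σ₃ = 0 if and only if α₃ = (10/9) α₂² (the condition for the oscillation in Ṽ to be isochronous up to order 2, i.e. for the linear-in-energy term of the period to vanish). -/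
open PowerSeries

section IsochronAux

noncomputable def isoQ (s t u : ℝ) : Polynomial ℝ :=
  Polynomial.X + Polynomial.C s * Polynomial.X^2 + Polynomial.C t * Polynomial.X^3 +
    Polynomial.C u * Polynomial.X^4

lemma isoQ_coeff (s t u : ℝ) (n : ℕ) : (isoQ s t u).coeff n =
    if n = 1 then 1 else if n = 2 then s else if n = 3 then t else if n = 4 then u else 0 := by
  rcases n with _|_|_|_|_|n <;>
    simp [isoQ, Polynomial.coeff_add, Polynomial.coeff_C_mul, Polynomial.coeff_X_pow,
      Polynomial.coeff_X]

lemma isoQ_sq_coeff (s t u : ℝ) (n : ℕ) (hn : n ≤ 4) : ((isoQ s t u)^2).coeff n =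
    if n = 2 then 1 else if n = 3 then 2*s else if n = 4 then 2*t + s^2 else 0 := by
  rw [sq, Polynomial.coeff_mul, Finset.Nat.sum_antidiagonal_eq_sum_range_succ_mk]
  interval_cases n <;> simp [Finset.sum_range_succ, isoQ_coeff] <;> ring

lemma isoQ_cube_coeff (s t u : ℝ) (n : ℕ) (hn : n ≤ 4) : ((isoQ s t u)^3).coeff n =
    if n = 3 then 1 else if n = 4 then 3*s else 0 := by
  rw [pow_succ, Polynomial.coeff_mul, Finset.Nat.sum_antidiagonal_eq_sum_range_succ_mk]
  interval_cases n <;>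
    simp [Finset.sum_range_succ, isoQ_coeff, isoQ_sq_coeff] <;> ring

lemma isoQ_four_coeff (s t u : ℝ) (n : ℕ) (hn : n ≤ 4) : ((isoQ s t u)^4).coeff n =
    if n = 4 then 1 else 0 := by
  rw [show (4:ℕ) = 2 + 2 by rfl, pow_add, Polynomial.coeff_mul,
    Finset.Nat.sum_antidiagonal_eq_sum_range_succ_mk]
  interval_cases n <;> simp [Finset.sum_range_succ, isoQ_sq_coeff]

end IsochronAux

/-- **Isochronism up to order 2.**
Let `Ṽ(x) = x²/2 + Σ_{n≥3} (α_{n−1}/n) xⁿ` be a formal power series over `ℝ` and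
`x(X) = X + Σ_{n≥2} σ_n Xⁿ` the unique formal power series with leading
coefficient `1` satisfying `Ṽ(x(X)) = X²/2` (composition encoded via polynomial
truncations).  Then `σ₃ = 0` if and only if `α₃ = (10/9) α₂²`, the condition for
the oscillation in `Ṽ` to be isochronous up to order 2. -/
theorem isochronism_order_two_iff
    (α σ : ℕ → ℝ) (Vt xs : PowerSeries ℝ)
    (hVt : ∀ n : ℕ, PowerSeries.coeff n Vt =
      if n = 2 then 1 / 2 else if 3 ≤ n then α (n - 1) / n else 0)
    (hxs0 : PowerSeries.coeff 0 xs = 0)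
    (hxs1 : PowerSeries.coeff 1 xs = 1)
    (hxsn : ∀ n : ℕ, 2 ≤ n → PowerSeries.coeff n xs = σ n)
    (hcomp : ∀ N n : ℕ, n < N →
      ((PowerSeries.trunc N Vt).comp (PowerSeries.trunc N xs)).coeff n =
        if n = 2 then 1 / 2 else 0) :
    σ 3 = 0 ↔ α 3 = (10 / 9) * α 2 ^ 2 := by
  have hQ : PowerSeries.trunc 5 xs = isoQ (σ 2) (σ 3) (σ 4) := by
    ext n
    rw [PowerSeries.coeff_trunc, isoQ_coeff]
    rcases n with _|_|_|_|_|n <;>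
      simp [hxs0, hxs1, hxsn 2 (by norm_num), hxsn 3 (by norm_num), hxsn 4 (by norm_num)]
  have hP : PowerSeries.trunc 5 Vt =
      Polynomial.C (1/2 : ℝ) * Polynomial.X^2 + Polynomial.C (α 2 / 3) * Polynomial.X^3 +
        Polynomial.C (α 3 / 4) * Polynomial.X^4 := by
    ext n
    rw [PowerSeries.coeff_trunc]
    rcases n with _|_|_|_|_|n <;>
      simp [hVt, Polynomial.coeff_add, Polynomial.coeff_C_mul, Polynomial.coeff_X_pow] <;>
      norm_num
  have h3 := hcomp 5 3 (by norm_num)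
  have h4 := hcomp 5 4 (by norm_num)
  rw [hP, hQ] at h3 h4
  simp only [Polynomial.add_comp, Polynomial.mul_comp, Polynomial.pow_comp, Polynomial.C_comp,
    Polynomial.X_comp, Polynomial.coeff_add, Polynomial.coeff_C_mul,
    isoQ_sq_coeff _ _ _ 3 (by norm_num), isoQ_cube_coeff _ _ _ 3 (by norm_num),
    isoQ_four_coeff _ _ _ 3 (by norm_num)] at h3
  simp only [Polynomial.add_comp, Polynomial.mul_comp, Polynomial.pow_comp, Polynomial.C_comp,
    Polynomial.X_comp, Polynomial.coeff_add, Polynomial.coeff_C_mul,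
    isoQ_sq_coeff _ _ _ 4 (by norm_num), isoQ_cube_coeff _ _ _ 4 (by norm_num),
    isoQ_four_coeff _ _ _ 4 (by norm_num)] at h4
  norm_num at h3 h4
  have hs2 : σ 2 = -(α 2)/3 := by linarith
  rw [hs2] at h4
  constructor <;> intro h <;> nlinarith [h4, h]
end

section
/- Let Ṽ(x) = x²/2 + Σ_{n≥3} (α_{n−1}/n) xⁿ be a formal power series over ℝ and x(X) = X + Σ_{n≥2} σ_n Xⁿ the unique formal power series with leading coefficient 1 satisfying Ṽ(x(X)) = X²/2. Then: (i) σ₃ = σ₅ = 0 if and only if α₃ = (10/9) α₂² and α₅ = −(56/27) α₂⁴ + (14/5) α₄ α₂; (ii) σ₃ = σ₅ = σ₇ = 0 if and only if, in addition, α₇ = (24/7) α₆ α₂ − (592/45) α₄ α₂³ + (36/25) α₄² + (848/81) α₂⁶. These are the constraints on the Taylor coefficients of a 1D potential isochronous up to orders 3 and 4 respectively. -/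
open PowerSeries

private lemma cme (p q : Polynomial ℝ) (n : ℕ) :
    (p*q).coeff n = ∑ i ∈ Finset.range (n+1), p.coeff i * q.coeff (n-i) := by
  rw [Polynomial.coeff_mul, Finset.Nat.sum_antidiagonal_eq_sum_range_succ_mk]

set_option maxHeartbeats 4000000 in
/-- **Isochronism up to orders 3 and 4.**
Let `Ṽ(x) = x²/2 + Σ_{n≥3} (α_{n−1}/n) xⁿ` be a formal power series over `ℝ` and
`x(X) = X + Σ_{n≥2} σ_n Xⁿ` the unique formal power series with leading
coefficient `1` satisfying `Ṽ(x(X)) = X²/2` (composition encoded via polynomial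
truncations).  Then:
(i) `σ₃ = σ₅ = 0` iff `α₃ = (10/9) α₂²` and `α₅ = −(56/27) α₂⁴ + (14/5) α₄ α₂`;
(ii) `σ₃ = σ₅ = σ₇ = 0` iff, in addition,
`α₇ = (24/7) α₆ α₂ − (592/45) α₄ α₂³ + (36/25) α₄² + (848/81) α₂⁶`. -/
theorem isochronism_orders_three_four_iff
    (α σ : ℕ → ℝ) (Vt xs : PowerSeries ℝ)
    (hVt : ∀ n : ℕ, PowerSeries.coeff n Vt =
      if n = 2 then 1 / 2 else if 3 ≤ n then α (n - 1) / n else 0)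
    (hxs0 : PowerSeries.coeff 0 xs = 0)
    (hxs1 : PowerSeries.coeff 1 xs = 1)
    (hxsn : ∀ n : ℕ, 2 ≤ n → PowerSeries.coeff n xs = σ n)
    (hcomp : ∀ N n : ℕ, n < N →
      ((PowerSeries.trunc N Vt).comp (PowerSeries.trunc N xs)).coeff n =
        if n = 2 then 1 / 2 else 0) :
    ((σ 3 = 0 ∧ σ 5 = 0) ↔
      (α 3 = (10 / 9) * α 2 ^ 2 ∧
        α 5 = -(56 / 27) * α 2 ^ 4 + (14 / 5) * α 4 * α 2)) ∧
    ((σ 3 = 0 ∧ σ 5 = 0 ∧ σ 7 = 0) ↔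
      (α 3 = (10 / 9) * α 2 ^ 2 ∧
        α 5 = -(56 / 27) * α 2 ^ 4 + (14 / 5) * α 4 * α 2 ∧
        α 7 = (24 / 7) * α 6 * α 2 - (592 / 45) * α 4 * α 2 ^ 3
          + (36 / 25) * α 4 ^ 2 + (848 / 81) * α 2 ^ 6)) := by
  have hq0 : (PowerSeries.trunc 9 xs).coeff 0 = (0:ℝ) := by
    rw [PowerSeries.coeff_trunc, if_pos (by norm_num)]; exact hxs0
  have hq1 : (PowerSeries.trunc 9 xs).coeff 1 = (1:ℝ) := by
    rw [PowerSeries.coeff_trunc, if_pos (by norm_num)]; exact hxs1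
  have hq2 : (PowerSeries.trunc 9 xs).coeff 2 = σ 2 := by
    rw [PowerSeries.coeff_trunc, if_pos (by norm_num)]; exact hxsn 2 (by norm_num)
  have hq3 : (PowerSeries.trunc 9 xs).coeff 3 = σ 3 := by
    rw [PowerSeries.coeff_trunc, if_pos (by norm_num)]; exact hxsn 3 (by norm_num)
  have hq4 : (PowerSeries.trunc 9 xs).coeff 4 = σ 4 := by
    rw [PowerSeries.coeff_trunc, if_pos (by norm_num)]; exact hxsn 4 (by norm_num)
  have hq5 : (PowerSeries.trunc 9 xs).coeff 5 = σ 5 := by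
    rw [PowerSeries.coeff_trunc, if_pos (by norm_num)]; exact hxsn 5 (by norm_num)
  have hq6 : (PowerSeries.trunc 9 xs).coeff 6 = σ 6 := by
    rw [PowerSeries.coeff_trunc, if_pos (by norm_num)]; exact hxsn 6 (by norm_num)
  have hq7 : (PowerSeries.trunc 9 xs).coeff 7 = σ 7 := by
    rw [PowerSeries.coeff_trunc, if_pos (by norm_num)]; exact hxsn 7 (by norm_num)
  have hq8 : (PowerSeries.trunc 9 xs).coeff 8 = σ 8 := by
    rw [PowerSeries.coeff_trunc, if_pos (by norm_num)]; exact hxsn 8 (by norm_num)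
  have hV : PowerSeries.trunc 9 Vt =
      Polynomial.C (1/2) * Polynomial.X^2 + Polynomial.C (α 2/3) * Polynomial.X^3
      + Polynomial.C (α 3/4) * Polynomial.X^4 + Polynomial.C (α 4/5) * Polynomial.X^5
      + Polynomial.C (α 5/6) * Polynomial.X^6 + Polynomial.C (α 6/7) * Polynomial.X^7
      + Polynomial.C (α 7/8) * Polynomial.X^8 := by
    ext n
    rw [PowerSeries.coeff_trunc, hVt]
    simp only [Polynomial.coeff_add, Polynomial.coeff_C_mul, Polynomial.coeff_X_pow]
    by_cases h : n < 9
    · interval_cases n <;> norm_num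
    · rw [if_neg h]
      simp [show n ≠ 2 by omega, show n ≠ 3 by omega, show n ≠ 4 by omega,
        show n ≠ 5 by omega, show n ≠ 6 by omega, show n ≠ 7 by omega, show n ≠ 8 by omega]
  have hP2_0 : ((PowerSeries.trunc 9 xs)^2).coeff 0 = (0:ℝ) := by
    rw [pow_succ, cme]
    simp only [pow_one, Finset.sum_range_succ, Finset.sum_range_zero, hq0, hq0]
    ring
  have hP2_1 : ((PowerSeries.trunc 9 xs)^2).coeff 1 = (0:ℝ) := by
    rw [pow_succ, cme]
    simp only [pow_one, Finset.sum_range_succ, Finset.sum_range_zero, hq0, hq1, hq0, hq1]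
    ring
  have hP2_2 : ((PowerSeries.trunc 9 xs)^2).coeff 2 = (1:ℝ) := by
    rw [pow_succ, cme]
    simp only [pow_one, Finset.sum_range_succ, Finset.sum_range_zero, hq0, hq1, hq2, hq0, hq1, hq2]
    ring
  have hP2_3 : ((PowerSeries.trunc 9 xs)^2).coeff 3 = (2:ℝ)*(σ 2) := by
    rw [pow_succ, cme]
    simp only [pow_one, Finset.sum_range_succ, Finset.sum_range_zero, hq0, hq1, hq2, hq3, hq0, hq1, hq2, hq3]
    ring
  have hP2_4 : ((PowerSeries.trunc 9 xs)^2).coeff 4 = (2:ℝ)*(σ 3) + (1:ℝ)*(σ 2)^2 := by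
    rw [pow_succ, cme]
    simp only [pow_one, Finset.sum_range_succ, Finset.sum_range_zero, hq0, hq1, hq2, hq3, hq4, hq0, hq1, hq2, hq3, hq4]
    ring
  have hP2_5 : ((PowerSeries.trunc 9 xs)^2).coeff 5 = (2:ℝ)*(σ 4) + (2:ℝ)*(σ 2)*(σ 3) := by
    rw [pow_succ, cme]
    simp only [pow_one, Finset.sum_range_succ, Finset.sum_range_zero, hq0, hq1, hq2, hq3, hq4, hq5, hq0, hq1, hq2, hq3, hq4, hq5]
    ring
  have hP2_6 : ((PowerSeries.trunc 9 xs)^2).coeff 6 = (2:ℝ)*(σ 5) + (1:ℝ)*(σ 3)^2 + (2:ℝ)*(σ 2)*(σ 4) := by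
    rw [pow_succ, cme]
    simp only [pow_one, Finset.sum_range_succ, Finset.sum_range_zero, hq0, hq1, hq2, hq3, hq4, hq5, hq6, hq0, hq1, hq2, hq3, hq4, hq5, hq6]
    ring
  have hP2_7 : ((PowerSeries.trunc 9 xs)^2).coeff 7 = (2:ℝ)*(σ 6) + (2:ℝ)*(σ 3)*(σ 4) + (2:ℝ)*(σ 2)*(σ 5) := by
    rw [pow_succ, cme]
    simp only [pow_one, Finset.sum_range_succ, Finset.sum_range_zero, hq0, hq1, hq2, hq3, hq4, hq5, hq6, hq7, hq0, hq1, hq2, hq3, hq4, hq5, hq6, hq7]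
    ring
  have hP2_8 : ((PowerSeries.trunc 9 xs)^2).coeff 8 = (2:ℝ)*(σ 7) + (1:ℝ)*(σ 4)^2 + (2:ℝ)*(σ 3)*(σ 5) + (2:ℝ)*(σ 2)*(σ 6) := by
    rw [pow_succ, cme]
    simp only [pow_one, Finset.sum_range_succ, Finset.sum_range_zero, hq0, hq1, hq2, hq3, hq4, hq5, hq6, hq7, hq8, hq0, hq1, hq2, hq3, hq4, hq5, hq6, hq7, hq8]
    ring
  have hP3_0 : ((PowerSeries.trunc 9 xs)^3).coeff 0 = (0:ℝ) := by
    rw [pow_succ, cme]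
    simp only [pow_one, Finset.sum_range_succ, Finset.sum_range_zero, hP2_0, hq0]
    ring
  have hP3_1 : ((PowerSeries.trunc 9 xs)^3).coeff 1 = (0:ℝ) := by
    rw [pow_succ, cme]
    simp only [pow_one, Finset.sum_range_succ, Finset.sum_range_zero, hP2_0, hP2_1, hq0, hq1]
    ring
  have hP3_2 : ((PowerSeries.trunc 9 xs)^3).coeff 2 = (0:ℝ) := by
    rw [pow_succ, cme]
    simp only [pow_one, Finset.sum_range_succ, Finset.sum_range_zero, hP2_0, hP2_1, hP2_2, hq0, hq1, hq2]
    ring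
  have hP3_3 : ((PowerSeries.trunc 9 xs)^3).coeff 3 = (1:ℝ) := by
    rw [pow_succ, cme]
    simp only [pow_one, Finset.sum_range_succ, Finset.sum_range_zero, hP2_0, hP2_1, hP2_2, hP2_3, hq0, hq1, hq2, hq3]
    ring
  have hP3_4 : ((PowerSeries.trunc 9 xs)^3).coeff 4 = (3:ℝ)*(σ 2) := by
    rw [pow_succ, cme]
    simp only [pow_one, Finset.sum_range_succ, Finset.sum_range_zero, hP2_0, hP2_1, hP2_2, hP2_3, hP2_4, hq0, hq1, hq2, hq3, hq4]
    ring
  have hP3_5 : ((PowerSeries.trunc 9 xs)^3).coeff 5 = (3:ℝ)*(σ 3) + (3:ℝ)*(σ 2)^2 := by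
    rw [pow_succ, cme]
    simp only [pow_one, Finset.sum_range_succ, Finset.sum_range_zero, hP2_0, hP2_1, hP2_2, hP2_3, hP2_4, hP2_5, hq0, hq1, hq2, hq3, hq4, hq5]
    ring
  have hP3_6 : ((PowerSeries.trunc 9 xs)^3).coeff 6 = (3:ℝ)*(σ 4) + (6:ℝ)*(σ 2)*(σ 3) + (1:ℝ)*(σ 2)^3 := by
    rw [pow_succ, cme]
    simp only [pow_one, Finset.sum_range_succ, Finset.sum_range_zero, hP2_0, hP2_1, hP2_2, hP2_3, hP2_4, hP2_5, hP2_6, hq0, hq1, hq2, hq3, hq4, hq5, hq6]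
    ring
  have hP3_7 : ((PowerSeries.trunc 9 xs)^3).coeff 7 = (3:ℝ)*(σ 5) + (3:ℝ)*(σ 3)^2 + (6:ℝ)*(σ 2)*(σ 4) + (3:ℝ)*(σ 2)^2*(σ 3) := by
    rw [pow_succ, cme]
    simp only [pow_one, Finset.sum_range_succ, Finset.sum_range_zero, hP2_0, hP2_1, hP2_2, hP2_3, hP2_4, hP2_5, hP2_6, hP2_7, hq0, hq1, hq2, hq3, hq4, hq5, hq6, hq7]
    ring
  have hP3_8 : ((PowerSeries.trunc 9 xs)^3).coeff 8 = (3:ℝ)*(σ 6) + (6:ℝ)*(σ 3)*(σ 4) + (6:ℝ)*(σ 2)*(σ 5) + (3:ℝ)*(σ 2)*(σ 3)^2 + (3:ℝ)*(σ 2)^2*(σ 4) := by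
    rw [pow_succ, cme]
    simp only [pow_one, Finset.sum_range_succ, Finset.sum_range_zero, hP2_0, hP2_1, hP2_2, hP2_3, hP2_4, hP2_5, hP2_6, hP2_7, hP2_8, hq0, hq1, hq2, hq3, hq4, hq5, hq6, hq7, hq8]
    ring
  have hP4_0 : ((PowerSeries.trunc 9 xs)^4).coeff 0 = (0:ℝ) := by
    rw [pow_succ, cme]
    simp only [pow_one, Finset.sum_range_succ, Finset.sum_range_zero, hP3_0, hq0]
    ring
  have hP4_1 : ((PowerSeries.trunc 9 xs)^4).coeff 1 = (0:ℝ) := by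
    rw [pow_succ, cme]
    simp only [pow_one, Finset.sum_range_succ, Finset.sum_range_zero, hP3_0, hP3_1, hq0, hq1]
    ring
  have hP4_2 : ((PowerSeries.trunc 9 xs)^4).coeff 2 = (0:ℝ) := by
    rw [pow_succ, cme]
    simp only [pow_one, Finset.sum_range_succ, Finset.sum_range_zero, hP3_0, hP3_1, hP3_2, hq0, hq1, hq2]
    ring
  have hP4_3 : ((PowerSeries.trunc 9 xs)^4).coeff 3 = (0:ℝ) := by
    rw [pow_succ, cme]
    simp only [pow_one, Finset.sum_range_succ, Finset.sum_range_zero, hP3_0, hP3_1, hP3_2, hP3_3, hq0, hq1, hq2, hq3]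
    ring
  have hP4_4 : ((PowerSeries.trunc 9 xs)^4).coeff 4 = (1:ℝ) := by
    rw [pow_succ, cme]
    simp only [pow_one, Finset.sum_range_succ, Finset.sum_range_zero, hP3_0, hP3_1, hP3_2, hP3_3, hP3_4, hq0, hq1, hq2, hq3, hq4]
    ring
  have hP4_5 : ((PowerSeries.trunc 9 xs)^4).coeff 5 = (4:ℝ)*(σ 2) := by
    rw [pow_succ, cme]
    simp only [pow_one, Finset.sum_range_succ, Finset.sum_range_zero, hP3_0, hP3_1, hP3_2, hP3_3, hP3_4, hP3_5, hq0, hq1, hq2, hq3, hq4, hq5]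
    ring
  have hP4_6 : ((PowerSeries.trunc 9 xs)^4).coeff 6 = (4:ℝ)*(σ 3) + (6:ℝ)*(σ 2)^2 := by
    rw [pow_succ, cme]
    simp only [pow_one, Finset.sum_range_succ, Finset.sum_range_zero, hP3_0, hP3_1, hP3_2, hP3_3, hP3_4, hP3_5, hP3_6, hq0, hq1, hq2, hq3, hq4, hq5, hq6]
    ring
  have hP4_7 : ((PowerSeries.trunc 9 xs)^4).coeff 7 = (4:ℝ)*(σ 4) + (12:ℝ)*(σ 2)*(σ 3) + (4:ℝ)*(σ 2)^3 := by
    rw [pow_succ, cme]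
    simp only [pow_one, Finset.sum_range_succ, Finset.sum_range_zero, hP3_0, hP3_1, hP3_2, hP3_3, hP3_4, hP3_5, hP3_6, hP3_7, hq0, hq1, hq2, hq3, hq4, hq5, hq6, hq7]
    ring
  have hP4_8 : ((PowerSeries.trunc 9 xs)^4).coeff 8 = (4:ℝ)*(σ 5) + (6:ℝ)*(σ 3)^2 + (12:ℝ)*(σ 2)*(σ 4) + (12:ℝ)*(σ 2)^2*(σ 3) + (1:ℝ)*(σ 2)^4 := by
    rw [pow_succ, cme]
    simp only [pow_one, Finset.sum_range_succ, Finset.sum_range_zero, hP3_0, hP3_1, hP3_2, hP3_3, hP3_4, hP3_5, hP3_6, hP3_7, hP3_8, hq0, hq1, hq2, hq3, hq4, hq5, hq6, hq7, hq8]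
    ring
  have hP5_0 : ((PowerSeries.trunc 9 xs)^5).coeff 0 = (0:ℝ) := by
    rw [pow_succ, cme]
    simp only [pow_one, Finset.sum_range_succ, Finset.sum_range_zero, hP4_0, hq0]
    ring
  have hP5_1 : ((PowerSeries.trunc 9 xs)^5).coeff 1 = (0:ℝ) := by
    rw [pow_succ, cme]
    simp only [pow_one, Finset.sum_range_succ, Finset.sum_range_zero, hP4_0, hP4_1, hq0, hq1]
    ring
  have hP5_2 : ((PowerSeries.trunc 9 xs)^5).coeff 2 = (0:ℝ) := by
    rw [pow_succ, cme]
    simp only [pow_one, Finset.sum_range_succ, Finset.sum_range_zero, hP4_0, hP4_1, hP4_2, hq0, hq1, hq2]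
    ring
  have hP5_3 : ((PowerSeries.trunc 9 xs)^5).coeff 3 = (0:ℝ) := by
    rw [pow_succ, cme]
    simp only [pow_one, Finset.sum_range_succ, Finset.sum_range_zero, hP4_0, hP4_1, hP4_2, hP4_3, hq0, hq1, hq2, hq3]
    ring
  have hP5_4 : ((PowerSeries.trunc 9 xs)^5).coeff 4 = (0:ℝ) := by
    rw [pow_succ, cme]
    simp only [pow_one, Finset.sum_range_succ, Finset.sum_range_zero, hP4_0, hP4_1, hP4_2, hP4_3, hP4_4, hq0, hq1, hq2, hq3, hq4]
    ring
  have hP5_5 : ((PowerSeries.trunc 9 xs)^5).coeff 5 = (1:ℝ) := by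
    rw [pow_succ, cme]
    simp only [pow_one, Finset.sum_range_succ, Finset.sum_range_zero, hP4_0, hP4_1, hP4_2, hP4_3, hP4_4, hP4_5, hq0, hq1, hq2, hq3, hq4, hq5]
    ring
  have hP5_6 : ((PowerSeries.trunc 9 xs)^5).coeff 6 = (5:ℝ)*(σ 2) := by
    rw [pow_succ, cme]
    simp only [pow_one, Finset.sum_range_succ, Finset.sum_range_zero, hP4_0, hP4_1, hP4_2, hP4_3, hP4_4, hP4_5, hP4_6, hq0, hq1, hq2, hq3, hq4, hq5, hq6]
    ring
  have hP5_7 : ((PowerSeries.trunc 9 xs)^5).coeff 7 = (5:ℝ)*(σ 3) + (10:ℝ)*(σ 2)^2 := by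
    rw [pow_succ, cme]
    simp only [pow_one, Finset.sum_range_succ, Finset.sum_range_zero, hP4_0, hP4_1, hP4_2, hP4_3, hP4_4, hP4_5, hP4_6, hP4_7, hq0, hq1, hq2, hq3, hq4, hq5, hq6, hq7]
    ring
  have hP5_8 : ((PowerSeries.trunc 9 xs)^5).coeff 8 = (5:ℝ)*(σ 4) + (20:ℝ)*(σ 2)*(σ 3) + (10:ℝ)*(σ 2)^3 := by
    rw [pow_succ, cme]
    simp only [pow_one, Finset.sum_range_succ, Finset.sum_range_zero, hP4_0, hP4_1, hP4_2, hP4_3, hP4_4, hP4_5, hP4_6, hP4_7, hP4_8, hq0, hq1, hq2, hq3, hq4, hq5, hq6, hq7, hq8]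
    ring
  have hP6_0 : ((PowerSeries.trunc 9 xs)^6).coeff 0 = (0:ℝ) := by
    rw [pow_succ, cme]
    simp only [pow_one, Finset.sum_range_succ, Finset.sum_range_zero, hP5_0, hq0]
    ring
  have hP6_1 : ((PowerSeries.trunc 9 xs)^6).coeff 1 = (0:ℝ) := by
    rw [pow_succ, cme]
    simp only [pow_one, Finset.sum_range_succ, Finset.sum_range_zero, hP5_0, hP5_1, hq0, hq1]
    ring
  have hP6_2 : ((PowerSeries.trunc 9 xs)^6).coeff 2 = (0:ℝ) := by
    rw [pow_succ, cme]
    simp only [pow_one, Finset.sum_range_succ, Finset.sum_range_zero, hP5_0, hP5_1, hP5_2, hq0, hq1, hq2]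
    ring
  have hP6_3 : ((PowerSeries.trunc 9 xs)^6).coeff 3 = (0:ℝ) := by
    rw [pow_succ, cme]
    simp only [pow_one, Finset.sum_range_succ, Finset.sum_range_zero, hP5_0, hP5_1, hP5_2, hP5_3, hq0, hq1, hq2, hq3]
    ring
  have hP6_4 : ((PowerSeries.trunc 9 xs)^6).coeff 4 = (0:ℝ) := by
    rw [pow_succ, cme]
    simp only [pow_one, Finset.sum_range_succ, Finset.sum_range_zero, hP5_0, hP5_1, hP5_2, hP5_3, hP5_4, hq0, hq1, hq2, hq3, hq4]
    ring
  have hP6_5 : ((PowerSeries.trunc 9 xs)^6).coeff 5 = (0:ℝ) := by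
    rw [pow_succ, cme]
    simp only [pow_one, Finset.sum_range_succ, Finset.sum_range_zero, hP5_0, hP5_1, hP5_2, hP5_3, hP5_4, hP5_5, hq0, hq1, hq2, hq3, hq4, hq5]
    ring
  have hP6_6 : ((PowerSeries.trunc 9 xs)^6).coeff 6 = (1:ℝ) := by
    rw [pow_succ, cme]
    simp only [pow_one, Finset.sum_range_succ, Finset.sum_range_zero, hP5_0, hP5_1, hP5_2, hP5_3, hP5_4, hP5_5, hP5_6, hq0, hq1, hq2, hq3, hq4, hq5, hq6]
    ring
  have hP6_7 : ((PowerSeries.trunc 9 xs)^6).coeff 7 = (6:ℝ)*(σ 2) := by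
    rw [pow_succ, cme]
    simp only [pow_one, Finset.sum_range_succ, Finset.sum_range_zero, hP5_0, hP5_1, hP5_2, hP5_3, hP5_4, hP5_5, hP5_6, hP5_7, hq0, hq1, hq2, hq3, hq4, hq5, hq6, hq7]
    ring
  have hP6_8 : ((PowerSeries.trunc 9 xs)^6).coeff 8 = (6:ℝ)*(σ 3) + (15:ℝ)*(σ 2)^2 := by
    rw [pow_succ, cme]
    simp only [pow_one, Finset.sum_range_succ, Finset.sum_range_zero, hP5_0, hP5_1, hP5_2, hP5_3, hP5_4, hP5_5, hP5_6, hP5_7, hP5_8, hq0, hq1, hq2, hq3, hq4, hq5, hq6, hq7, hq8]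
    ring
  have hP7_0 : ((PowerSeries.trunc 9 xs)^7).coeff 0 = (0:ℝ) := by
    rw [pow_succ, cme]
    simp only [pow_one, Finset.sum_range_succ, Finset.sum_range_zero, hP6_0, hq0]
    ring
  have hP7_1 : ((PowerSeries.trunc 9 xs)^7).coeff 1 = (0:ℝ) := by
    rw [pow_succ, cme]
    simp only [pow_one, Finset.sum_range_succ, Finset.sum_range_zero, hP6_0, hP6_1, hq0, hq1]
    ring
  have hP7_2 : ((PowerSeries.trunc 9 xs)^7).coeff 2 = (0:ℝ) := by
    rw [pow_succ, cme]
    simp only [pow_one, Finset.sum_range_succ, Finset.sum_range_zero, hP6_0, hP6_1, hP6_2, hq0, hq1, hq2]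
    ring
  have hP7_3 : ((PowerSeries.trunc 9 xs)^7).coeff 3 = (0:ℝ) := by
    rw [pow_succ, cme]
    simp only [pow_one, Finset.sum_range_succ, Finset.sum_range_zero, hP6_0, hP6_1, hP6_2, hP6_3, hq0, hq1, hq2, hq3]
    ring
  have hP7_4 : ((PowerSeries.trunc 9 xs)^7).coeff 4 = (0:ℝ) := by
    rw [pow_succ, cme]
    simp only [pow_one, Finset.sum_range_succ, Finset.sum_range_zero, hP6_0, hP6_1, hP6_2, hP6_3, hP6_4, hq0, hq1, hq2, hq3, hq4]
    ring
  have hP7_5 : ((PowerSeries.trunc 9 xs)^7).coeff 5 = (0:ℝ) := by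
    rw [pow_succ, cme]
    simp only [pow_one, Finset.sum_range_succ, Finset.sum_range_zero, hP6_0, hP6_1, hP6_2, hP6_3, hP6_4, hP6_5, hq0, hq1, hq2, hq3, hq4, hq5]
    ring
  have hP7_6 : ((PowerSeries.trunc 9 xs)^7).coeff 6 = (0:ℝ) := by
    rw [pow_succ, cme]
    simp only [pow_one, Finset.sum_range_succ, Finset.sum_range_zero, hP6_0, hP6_1, hP6_2, hP6_3, hP6_4, hP6_5, hP6_6, hq0, hq1, hq2, hq3, hq4, hq5, hq6]
    ring
  have hP7_7 : ((PowerSeries.trunc 9 xs)^7).coeff 7 = (1:ℝ) := by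
    rw [pow_succ, cme]
    simp only [pow_one, Finset.sum_range_succ, Finset.sum_range_zero, hP6_0, hP6_1, hP6_2, hP6_3, hP6_4, hP6_5, hP6_6, hP6_7, hq0, hq1, hq2, hq3, hq4, hq5, hq6, hq7]
    ring
  have hP7_8 : ((PowerSeries.trunc 9 xs)^7).coeff 8 = (7:ℝ)*(σ 2) := by
    rw [pow_succ, cme]
    simp only [pow_one, Finset.sum_range_succ, Finset.sum_range_zero, hP6_0, hP6_1, hP6_2, hP6_3, hP6_4, hP6_5, hP6_6, hP6_7, hP6_8, hq0, hq1, hq2, hq3, hq4, hq5, hq6, hq7, hq8]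
    ring
  have hP8_0 : ((PowerSeries.trunc 9 xs)^8).coeff 0 = (0:ℝ) := by
    rw [pow_succ, cme]
    simp only [pow_one, Finset.sum_range_succ, Finset.sum_range_zero, hP7_0, hq0]
    ring
  have hP8_1 : ((PowerSeries.trunc 9 xs)^8).coeff 1 = (0:ℝ) := by
    rw [pow_succ, cme]
    simp only [pow_one, Finset.sum_range_succ, Finset.sum_range_zero, hP7_0, hP7_1, hq0, hq1]
    ring
  have hP8_2 : ((PowerSeries.trunc 9 xs)^8).coeff 2 = (0:ℝ) := by
    rw [pow_succ, cme]
    simp only [pow_one, Finset.sum_range_succ, Finset.sum_range_zero, hP7_0, hP7_1, hP7_2, hq0, hq1, hq2]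
    ring
  have hP8_3 : ((PowerSeries.trunc 9 xs)^8).coeff 3 = (0:ℝ) := by
    rw [pow_succ, cme]
    simp only [pow_one, Finset.sum_range_succ, Finset.sum_range_zero, hP7_0, hP7_1, hP7_2, hP7_3, hq0, hq1, hq2, hq3]
    ring
  have hP8_4 : ((PowerSeries.trunc 9 xs)^8).coeff 4 = (0:ℝ) := by
    rw [pow_succ, cme]
    simp only [pow_one, Finset.sum_range_succ, Finset.sum_range_zero, hP7_0, hP7_1, hP7_2, hP7_3, hP7_4, hq0, hq1, hq2, hq3, hq4]
    ring
  have hP8_5 : ((PowerSeries.trunc 9 xs)^8).coeff 5 = (0:ℝ) := by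
    rw [pow_succ, cme]
    simp only [pow_one, Finset.sum_range_succ, Finset.sum_range_zero, hP7_0, hP7_1, hP7_2, hP7_3, hP7_4, hP7_5, hq0, hq1, hq2, hq3, hq4, hq5]
    ring
  have hP8_6 : ((PowerSeries.trunc 9 xs)^8).coeff 6 = (0:ℝ) := by
    rw [pow_succ, cme]
    simp only [pow_one, Finset.sum_range_succ, Finset.sum_range_zero, hP7_0, hP7_1, hP7_2, hP7_3, hP7_4, hP7_5, hP7_6, hq0, hq1, hq2, hq3, hq4, hq5, hq6]
    ring
  have hP8_7 : ((PowerSeries.trunc 9 xs)^8).coeff 7 = (0:ℝ) := by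
    rw [pow_succ, cme]
    simp only [pow_one, Finset.sum_range_succ, Finset.sum_range_zero, hP7_0, hP7_1, hP7_2, hP7_3, hP7_4, hP7_5, hP7_6, hP7_7, hq0, hq1, hq2, hq3, hq4, hq5, hq6, hq7]
    ring
  have hP8_8 : ((PowerSeries.trunc 9 xs)^8).coeff 8 = (1:ℝ) := by
    rw [pow_succ, cme]
    simp only [pow_one, Finset.sum_range_succ, Finset.sum_range_zero, hP7_0, hP7_1, hP7_2, hP7_3, hP7_4, hP7_5, hP7_6, hP7_7, hP7_8, hq0, hq1, hq2, hq3, hq4, hq5, hq6, hq7, hq8]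
    ring
  have e3 := hcomp 9 3 (by norm_num)
  rw [hV, if_neg (by norm_num)] at e3
  simp only [Polynomial.add_comp, Polynomial.mul_comp, Polynomial.pow_comp,
    Polynomial.C_comp, Polynomial.X_comp, Polynomial.coeff_add,
    Polynomial.coeff_C_mul, hP2_3, hP3_3, hP4_3, hP5_3, hP6_3, hP7_3, hP8_3] at e3
  have hs2 : σ 2 = ((-1:ℝ)/3)*(α 2) := by linear_combination e3
  have e4 := hcomp 9 4 (by norm_num)
  rw [hV, if_neg (by norm_num)] at e4
  simp only [Polynomial.add_comp, Polynomial.mul_comp, Polynomial.pow_comp,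
    Polynomial.C_comp, Polynomial.X_comp, Polynomial.coeff_add,
    Polynomial.coeff_C_mul, hP2_4, hP3_4, hP4_4, hP5_4, hP6_4, hP7_4, hP8_4] at e4
  rw [hs2] at e4
  have hs3 : σ 3 = ((-1:ℝ)/4)*(α 3) + ((5:ℝ)/18)*(α 2)^2 := by linear_combination e4
  have e5 := hcomp 9 5 (by norm_num)
  rw [hV, if_neg (by norm_num)] at e5
  simp only [Polynomial.add_comp, Polynomial.mul_comp, Polynomial.pow_comp,
    Polynomial.C_comp, Polynomial.X_comp, Polynomial.coeff_add,
    Polynomial.coeff_C_mul, hP2_5, hP3_5, hP4_5, hP5_5, hP6_5, hP7_5, hP8_5] at e5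
  rw [hs2, hs3] at e5
  have hs4 : σ 4 = ((-1:ℝ)/5)*(α 4) + ((1:ℝ)/2)*(α 2)*(α 3) + ((-8:ℝ)/27)*(α 2)^3 := by linear_combination e5
  have e6 := hcomp 9 6 (by norm_num)
  rw [hV, if_neg (by norm_num)] at e6
  simp only [Polynomial.add_comp, Polynomial.mul_comp, Polynomial.pow_comp,
    Polynomial.C_comp, Polynomial.X_comp, Polynomial.coeff_add,
    Polynomial.coeff_C_mul, hP2_6, hP3_6, hP4_6, hP5_6, hP6_6, hP7_6, hP8_6] at e6
  rw [hs2, hs3, hs4] at e6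
  have hs5 : σ 5 = ((-1:ℝ)/6)*(α 5) + ((7:ℝ)/32)*(α 3)^2 + ((7:ℝ)/15)*(α 2)*(α 4) + ((-7:ℝ)/8)*(α 2)^2*(α 3) + ((77:ℝ)/216)*(α 2)^4 := by linear_combination e6
  have e7 := hcomp 9 7 (by norm_num)
  rw [hV, if_neg (by norm_num)] at e7
  simp only [Polynomial.add_comp, Polynomial.mul_comp, Polynomial.pow_comp,
    Polynomial.C_comp, Polynomial.X_comp, Polynomial.coeff_add,
    Polynomial.coeff_C_mul, hP2_7, hP3_7, hP4_7, hP5_7, hP6_7, hP7_7, hP8_7] at e7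
  rw [hs2, hs3, hs4, hs5] at e7
  have hs6 : σ 6 = ((-1:ℝ)/7)*(α 6) + ((2:ℝ)/5)*(α 3)*(α 4) + ((4:ℝ)/9)*(α 2)*(α 5) + ((-5:ℝ)/6)*(α 2)*(α 3)^2 + ((-8:ℝ)/9)*(α 2)^2*(α 4) + ((40:ℝ)/27)*(α 2)^3*(α 3) + ((-112:ℝ)/243)*(α 2)^5 := by linear_combination e7
  have e8 := hcomp 9 8 (by norm_num)
  rw [hV, if_neg (by norm_num)] at e8
  simp only [Polynomial.add_comp, Polynomial.mul_comp, Polynomial.pow_comp,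
    Polynomial.C_comp, Polynomial.X_comp, Polynomial.coeff_add,
    Polynomial.coeff_C_mul, hP2_8, hP3_8, hP4_8, hP5_8, hP6_8, hP7_8, hP8_8] at e8
  rw [hs2, hs3, hs4, hs5, hs6] at e8
  have hs7 : σ 7 = ((-1:ℝ)/8)*(α 7) + ((9:ℝ)/50)*(α 4)^2 + ((3:ℝ)/8)*(α 3)*(α 5) + ((-33:ℝ)/128)*(α 3)^3 + ((3:ℝ)/7)*(α 2)*(α 6) + ((-33:ℝ)/20)*(α 2)*(α 3)*(α 4) + ((-11:ℝ)/12)*(α 2)^2*(α 5) + ((143:ℝ)/64)*(α 2)^2*(α 3)^2 + ((143:ℝ)/90)*(α 2)^3*(α 4) + ((-715:ℝ)/288)*(α 2)^4*(α 3) + ((2431:ℝ)/3888)*(α 2)^6 := by linear_combination e8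
  constructor
  · constructor
    · rintro ⟨h3, h5⟩
      rw [hs3] at h3
      rw [hs5] at h5
      have hA3 : α 3 = (10/9) * α 2 ^ 2 := by linear_combination (-4:ℝ)*h3
      refine ⟨hA3, ?_⟩
      linear_combination (-6:ℝ)*h5 + (6*(((7:ℝ)/32)*(α 3) - ((91:ℝ)/144)*(α 2)^2))*hA3
    · rintro ⟨hA3, hA5⟩
      constructor
      · rw [hs3]; linear_combination (-(1:ℝ)/4)*hA3
      · rw [hs5]; linear_combination (-(1:ℝ)/6)*hA5 + (((7:ℝ)/32)*(α 3) - ((91:ℝ)/144)*(α 2)^2)*hA3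
  · constructor
    · rintro ⟨h3, h5, h7⟩
      rw [hs3] at h3
      rw [hs5] at h5
      rw [hs7] at h7
      have hA3 : α 3 = (10/9) * α 2 ^ 2 := by linear_combination (-4:ℝ)*h3
      have hA5 : α 5 = -(56 / 27) * α 2 ^ 4 + (14 / 5) * α 4 * α 2 := by
        linear_combination (-6:ℝ)*h5 + (6*(((7:ℝ)/32)*(α 3) - ((91:ℝ)/144)*(α 2)^2))*hA3
      refine ⟨hA3, hA5, ?_⟩
      linear_combination (-8:ℝ)*h7 + (8*(((3:ℝ)/8)*(α 5) - ((33:ℝ)/128)*(α 3)^2 - ((33:ℝ)/20)*(α 2)*(α 4) + ((187:ℝ)/96)*(α 2)^2*(α 3) - ((275:ℝ)/864)*(α 2)^4))*hA3 + (8*((-(1:ℝ)/2)*(α 2)^2))*hA5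
    · rintro ⟨hA3, hA5, hA7⟩
      refine ⟨?_, ?_, ?_⟩
      · rw [hs3]; linear_combination (-(1:ℝ)/4)*hA3
      · rw [hs5]; linear_combination (-(1:ℝ)/6)*hA5 + (((7:ℝ)/32)*(α 3) - ((91:ℝ)/144)*(α 2)^2)*hA3
      · rw [hs7]; linear_combination (-(1:ℝ)/8)*hA7 + ((-(1:ℝ)/2)*(α 2)^2)*hA5 + (((3:ℝ)/8)*(α 5) - ((33:ℝ)/128)*(α 3)^2 - ((33:ℝ)/20)*(α 2)*(α 4) + ((187:ℝ)/96)*(α 2)^2*(α 3) - ((275:ℝ)/864)*(α 2)^4)*hA3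
end

section
/- Fix an integer n ≥ 1 and constants c > 0, γ > 0, and for each integer N ≥ 2 define the bifurcation energy density ε_N = (c sin²(π/N)/(n γ))^{1/n} and the total bifurcation energy E_N = N ε_N. Then N^{2/n − 1} E_N converges to (c π²/(n γ))^{1/n} as N → ∞; in particular, E_N → 0 if n = 1, E_N converges to the finite nonzero limit (c π²/(2γ))^{1/2} if n = 2, and E_N → ∞ if n ≥ 3. Hence families of discrete breathers bifurcating from band edge modes isochronous up to order n ≥ 2 possess a nonzero energy threshold in the thermodynamic limit, while for n = 1 there is none. -/
open Real Filter

lemma nat_mul_sin_pi_div_tendsto :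
    Tendsto (fun N : ℕ => (N : ℝ) * Real.sin (π / N)) atTop (nhds π) := by
  have hslope : Tendsto (slope Real.sin 0) (nhdsWithin 0 {(0:ℝ)}ᶜ) (nhds 1) := by
    have h := Real.hasDerivAt_sin 0
    rw [Real.cos_zero] at h
    exact hasDerivAt_iff_tendsto_slope.mp h
  have h0 : Tendsto (fun N : ℕ => π / N) atTop (nhdsWithin 0 {(0:ℝ)}ᶜ) := by
    apply tendsto_nhdsWithin_of_tendsto_nhds_of_eventually_within
    · exact tendsto_const_div_atTop_nhds_zero_nat π
    · filter_upwards [eventually_ge_atTop 1] with N hN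
      have : (0:ℝ) < N := by exact_mod_cast hN
      have : (0:ℝ) < π / N := div_pos Real.pi_pos this
      simpa using this.ne'
  have hcomp : Tendsto (fun N : ℕ => Real.sin (π / N) / (π / N)) atTop (nhds 1) := by
    have := hslope.comp h0
    apply this.congr
    intro N
    simp [Function.comp, slope_def_field]
  have := hcomp.const_mul π
  rw [mul_one] at this
  apply this.congr'
  filter_upwards [eventually_ge_atTop 1] with N hN
  have hNpos : (0:ℝ) < N := by exact_mod_cast hN
  have hπN : (0:ℝ) < π / N := div_pos Real.pi_pos hNpos
  field_simp

/-- **Scaling of the total bifurcation energy and energy thresholds.**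
Fix `n ≥ 1` and `c, γ > 0`, and for `N ≥ 2` let
`ε_N = (c sin²(π/N)/(nγ))^{1/n}` and `E_N = N ε_N`.  Then
`N^{2/n − 1} E_N → (c π²/(nγ))^{1/n}` as `N → ∞`; in particular `E_N → 0` for
`n = 1`, `E_N → (c π²/(2γ))^{1/2}` for `n = 2`, and `E_N → ∞` for `n ≥ 3`. -/
theorem total_bifurcation_energy_scaling
    (n : ℕ) (hn : 1 ≤ n) (c γ : ℝ) (hc : 0 < c) (hγ : 0 < γ)
    (ε E : ℕ → ℝ)
    (hε : ∀ N : ℕ, 2 ≤ N →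
      ε N = (c * Real.sin (π / N) ^ 2 / (n * γ)) ^ ((1 : ℝ) / n))
    (hE : ∀ N : ℕ, 2 ≤ N → E N = N * ε N) :
    Tendsto (fun N : ℕ => (N : ℝ) ^ ((2 : ℝ) / n - 1) * E N) atTop
        (nhds ((c * π ^ 2 / (n * γ)) ^ ((1 : ℝ) / n))) ∧
      (n = 1 → Tendsto E atTop (nhds 0)) ∧
      (n = 2 → Tendsto E atTop (nhds ((c * π ^ 2 / (2 * γ)) ^ ((1 : ℝ) / 2)))) ∧
      (3 ≤ n → Tendsto E atTop atTop) := by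
  have hnγ : (0:ℝ) < (n:ℝ) * γ := by
    have : (0:ℝ) < (n:ℝ) := by exact_mod_cast hn
    positivity
  have hLpos : (0:ℝ) < (c * π ^ 2 / (n * γ)) ^ ((1 : ℝ) / n) := by
    apply Real.rpow_pos_of_pos
    have := Real.pi_pos
    positivity
  -- Main limit
  have hmain : Tendsto (fun N : ℕ => (N : ℝ) ^ ((2 : ℝ) / n - 1) * E N) atTop
      (nhds ((c * π ^ 2 / (n * γ)) ^ ((1 : ℝ) / n))) := by
    have hcont : ContinuousAt (fun x : ℝ => (c * x ^ 2 / (n * γ)) ^ ((1 : ℝ) / n)) π := by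
      apply ContinuousAt.rpow_const
      · fun_prop
      · left
        have := Real.pi_pos
        positivity
    have hcomp : Tendsto (fun N : ℕ =>
        (c * ((N : ℝ) * Real.sin (π / N)) ^ 2 / (n * γ)) ^ ((1 : ℝ) / n)) atTop
        (nhds ((c * π ^ 2 / (n * γ)) ^ ((1 : ℝ) / n))) :=
      hcont.tendsto.comp nat_mul_sin_pi_div_tendsto
    apply hcomp.congr'
    filter_upwards [eventually_ge_atTop 2] with N hN
    have hNpos : (0:ℝ) < N := by
      have : (2:ℝ) ≤ N := by exact_mod_cast hN
      linarith
    rw [hE N hN]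
    have hx : (0:ℝ) ≤ c * Real.sin (π / N) ^ 2 / (n * γ) := by positivity
    have hN2 : ((N:ℝ) ^ 2) ^ ((1:ℝ)/n) * (c * Real.sin (π / N) ^ 2 / (n * γ)) ^ ((1:ℝ)/n)
        = (c * ((N : ℝ) * Real.sin (π / N)) ^ 2 / (n * γ)) ^ ((1 : ℝ) / n) := by
      rw [← Real.mul_rpow (by positivity) hx]
      ring_nf
    rw [← hN2]
    have hpow : ((N:ℝ) ^ 2) ^ ((1:ℝ)/n) = (N:ℝ) ^ ((2:ℝ)/n) := by
      rw [← Real.rpow_natCast (N:ℝ) 2, ← Real.rpow_mul hNpos.le]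
      norm_num [div_eq_mul_inv]
    rw [hpow, hε N hN]
    rw [show (2:ℝ)/n = (2/(n:ℝ) - 1) + 1 by ring, Real.rpow_add hNpos, Real.rpow_one]
    ring
  refine ⟨hmain, ?_, ?_, ?_⟩
  · -- n = 1
    rintro rfl
    have h := (tendsto_inv_atTop_nhds_zero_nat.mul hmain)
    rw [zero_mul] at h
    apply h.congr'
    filter_upwards [eventually_ge_atTop 1] with N hN
    have hNpos : (0:ℝ) < N := by exact_mod_cast hN
    have : ((2:ℝ)/(1:ℕ) - 1) = 1 := by norm_num
    rw [this, Real.rpow_one]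
    field_simp
  · -- n = 2
    rintro rfl
    have heq : ((c * π ^ 2 / ((2:ℕ) * γ)) ^ ((1 : ℝ) / (2:ℕ)))
        = (c * π ^ 2 / (2 * γ)) ^ ((1 : ℝ) / 2) := by norm_num
    rw [← heq]
    apply hmain.congr'
    filter_upwards [eventually_ge_atTop 1] with N hN
    have : ((2:ℝ)/(2:ℕ) - 1) = 0 := by norm_num
    rw [this, Real.rpow_zero, one_mul]
  · -- n ≥ 3
    intro hn3
    have hexp : (0:ℝ) < 1 - 2 / n := by
      have h3 : (3:ℝ) ≤ n := by exact_mod_cast hn3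
      rw [sub_pos, div_lt_one (by linarith)]
      linarith
    have hpow : Tendsto (fun N : ℕ => (N:ℝ) ^ ((1:ℝ) - 2 / n)) atTop atTop :=
      (tendsto_rpow_atTop hexp).comp tendsto_natCast_atTop_atTop
    have h := hpow.atTop_mul_pos hLpos hmain
    apply h.congr'
    filter_upwards [eventually_ge_atTop 1] with N hN
    have hNpos : (0:ℝ) < N := by exact_mod_cast hN
    rw [← mul_assoc, ← Real.rpow_add hNpos]
    norm_num
end
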